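/- Suppose the matrix A ∈ ℝ^{n×m} is a tight frame satisfying (1/K)·A Aᵀ = I where K = m/n, the columns of A satisfy ‖a_i‖ ≤ M for all i, the mutual coherence max_{i≠j} |⟨a_i/‖a_i‖, a_j/‖a_j‖⟩| ≤ μ, and M^{4/3} K^{1/3} < 4^{-1/3} ξ for some ξ > 0. Let q ∈ S^{n-1} and ζ = Aᵀq, and set α_i = ‖ζ‖₄⁴/‖a_i‖² and β_i = (∑_{j≠i} ⟨a_i, a_j⟩ ζ_j³)/‖a_i‖². If ‖ζ‖₄⁴ ≥ ξ μ^{2/3} ‖ζ‖₃², then it is impossible that |ζ_i| < 2|β_i|/α_i for all i ∈ [m]. -/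

import Mathlib

open RealInnerProductSpace

set_option maxHeartbeats 1000000 in
/-- Lemma `app-case-1` of Qu et al.: under the tight-frame, bounded-column, incoherence and
`M^{4/3} K^{1/3} < 4^{-1/3} ξ` assumptions, a point `q` in the region
`‖ζ‖₄⁴ ≥ ξ μ^{2/3} ‖ζ‖₃²` cannot have all coordinates `|ζ_i| < 2|β_i|/α_i`. -/
theorem stmt_7 {n m : ℕ} (hn : 0 < n) (hm : 0 < m)
    (a : Fin m → EuclideanSpace ℝ (Fin n)) (q : EuclideanSpace ℝ (Fin n))
    (M μ ξ : ℝ) (hq : ‖q‖ = 1)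
    (ha0 : ∀ i, a i ≠ 0)
    (haM : ∀ i, ‖a i‖ ≤ M)
    (htf : ∀ u : EuclideanSpace ℝ (Fin n),
      ∑ i, ⟪a i, u⟫ ^ 2 = ((m : ℝ) / n) * ‖u‖ ^ 2)
    (hμ0 : 0 < μ) (hξ0 : 0 < ξ)
    (hcoh : ∀ i j, i ≠ j → |⟪‖a i‖⁻¹ • a i, ‖a j‖⁻¹ • a j⟫| ≤ μ)
    (hMK : M ^ ((4 : ℝ) / 3) * ((m : ℝ) / n) ^ ((1 : ℝ) / 3) < ξ / (4 : ℝ) ^ ((1 : ℝ) / 3))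
    (hreg : ξ * μ ^ ((2 : ℝ) / 3) * (∑ i, |⟪a i, q⟫| ^ 3) ^ ((2 : ℝ) / 3)
      ≤ ∑ i, ⟪a i, q⟫ ^ 4) :
    ¬ ∀ i, |⟪a i, q⟫| <
      2 * |(∑ j ∈ Finset.univ.erase i, ⟪a i, a j⟫ * ⟪a j, q⟫ ^ 3) / ‖a i‖ ^ 2| /
        ((∑ k, ⟪a k, q⟫ ^ 4) / ‖a i‖ ^ 2) := by
  intro h
  have hK : (0:ℝ) < (m:ℝ)/n :=
    div_pos (by exact_mod_cast hm) (by exact_mod_cast hn)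
  have hS2 : ∑ i, ⟪a i, q⟫ ^ 2 = (m:ℝ)/n := by
    have := htf q; rw [hq] at this; simpa using this
  have hM0 : 0 < M :=
    lt_of_lt_of_le (norm_pos_iff.mpr (ha0 ⟨0, hm⟩)) (haM ⟨0, hm⟩)
  have hex : ∃ i, ⟪a i, q⟫ ≠ 0 := by
    by_contra hc
    push_neg at hc
    rw [Finset.sum_eq_zero (fun i _ => by rw [hc i]; ring)] at hS2
    linarith
  obtain ⟨i0, hi0⟩ := hex
  set S3 : ℝ := ∑ i, |⟪a i, q⟫| ^ 3 with hS3def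
  set S4 : ℝ := ∑ i, ⟪a i, q⟫ ^ 4 with hS4def
  have hS3pos : 0 < S3 := by
    have h1 : 0 < |⟪a i0, q⟫| ^ 3 := by positivity
    calc (0:ℝ) < |⟪a i0, q⟫| ^ 3 := h1
      _ ≤ S3 := Finset.single_le_sum (f := fun i => |⟪a i, q⟫| ^ 3)
        (fun i _ => by positivity) (Finset.mem_univ i0)
  have hS4pos : 0 < S4 := by
    have h1 : 0 < ⟪a i0, q⟫ ^ 4 :=
      lt_of_le_of_ne (by positivity) (Ne.symm (pow_ne_zero 4 hi0))
    calc (0:ℝ) < ⟪a i0, q⟫ ^ 4 := h1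
      _ ≤ S4 := Finset.single_le_sum (f := fun i => ⟪a i, q⟫ ^ 4)
        (fun i _ => by positivity) (Finset.mem_univ i0)
  -- inner product bound
  have hinner : ∀ i j, i ≠ j → |⟪a i, a j⟫| ≤ μ * M ^ 2 := by
    intro i j hij
    have hc := hcoh i j hij
    have hai : 0 < ‖a i‖ := norm_pos_iff.mpr (ha0 i)
    have haj : 0 < ‖a j‖ := norm_pos_iff.mpr (ha0 j)
    rw [real_inner_smul_left, real_inner_smul_right, abs_mul, abs_mul,
      abs_inv, abs_inv, abs_norm, abs_norm] at hc
    have h2 : |⟪a i, a j⟫| ≤ μ * (‖a i‖ * ‖a j‖) := by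
      have := mul_le_mul_of_nonneg_left hc (le_of_lt (mul_pos hai haj))
      calc |⟪a i, a j⟫| = ‖a i‖ * ‖a j‖ * (‖a i‖⁻¹ * (‖a j‖⁻¹ * |⟪a i, a j⟫|)) := by
            field_simp
        _ ≤ ‖a i‖ * ‖a j‖ * μ := this
        _ = μ * (‖a i‖ * ‖a j‖) := by ring
    calc |⟪a i, a j⟫| ≤ μ * (‖a i‖ * ‖a j‖) := h2
      _ ≤ μ * M ^ 2 := by
          nlinarith [hμ0, mul_le_mul (haM i) (haM j) haj.le hM0.le]
  -- per index key inequality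
  have key : ∀ i, |⟪a i, q⟫| * S4 < 2 * (μ * M ^ 2 * S3) := by
    intro i
    have hai : 0 < ‖a i‖ := norm_pos_iff.mpr (ha0 i)
    have hc2 : (0:ℝ) < ‖a i‖ ^ 2 := by positivity
    set C : ℝ := ∑ j ∈ Finset.univ.erase i, ⟪a i, a j⟫ * ⟪a j, q⟫ ^ 3 with hCdef
    have hC : |C| ≤ μ * M ^ 2 * S3 := by
      calc |C| ≤ ∑ j ∈ Finset.univ.erase i, |⟪a i, a j⟫ * ⟪a j, q⟫ ^ 3| :=
            Finset.abs_sum_le_sum_abs _ _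
        _ ≤ ∑ j ∈ Finset.univ.erase i, μ * M ^ 2 * |⟪a j, q⟫| ^ 3 := by
            refine Finset.sum_le_sum fun j hj => ?_
            rw [abs_mul, abs_pow]
            exact mul_le_mul_of_nonneg_right
              (hinner i j (Finset.ne_of_mem_erase hj).symm) (by positivity)
        _ ≤ ∑ j, μ * M ^ 2 * |⟪a j, q⟫| ^ 3 :=
            Finset.sum_le_sum_of_subset_of_nonneg (Finset.erase_subset _ _)
              (fun j _ _ => by positivity)
        _ = μ * M ^ 2 * S3 := by rw [hS3def, Finset.mul_sum]
    have hi := h i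
    have heq : 2 * |C / ‖a i‖ ^ 2| / (S4 / ‖a i‖ ^ 2) = 2 * |C| / S4 := by
      rw [abs_div, abs_of_pos hc2]
      field_simp
    rw [heq] at hi
    have := (lt_div_iff₀ hS4pos).mp hi
    linarith
  -- summed inequalities
  have hsum2 : S3 * S4 < ((m:ℝ)/n) * (2 * (μ * M ^ 2 * S3)) := by
    have hlt : ∑ i, ⟪a i, q⟫ ^ 2 * (|⟪a i, q⟫| * S4)
        < ∑ i, ⟪a i, q⟫ ^ 2 * (2 * (μ * M ^ 2 * S3)) := by
      refine Finset.sum_lt_sum (fun i _ => mul_le_mul_of_nonneg_left (key i).le (sq_nonneg _))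
        ⟨i0, Finset.mem_univ _, ?_⟩
      exact mul_lt_mul_of_pos_left (key i0)
        (lt_of_le_of_ne (sq_nonneg _) (Ne.symm (pow_ne_zero 2 hi0)))
    have hl : ∑ i, ⟪a i, q⟫ ^ 2 * (|⟪a i, q⟫| * S4) = S3 * S4 := by
      rw [hS3def, Finset.sum_mul]
      refine Finset.sum_congr rfl fun i _ => ?_
      rw [← sq_abs (⟪a i, q⟫)]; ring
    have hr : ∑ i, ⟪a i, q⟫ ^ 2 * (2 * (μ * M ^ 2 * S3))
        = ((m:ℝ)/n) * (2 * (μ * M ^ 2 * S3)) := by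
      rw [← Finset.sum_mul, hS2]
    rw [hl, hr] at hlt; exact hlt
  have hsum3 : S4 * S4 < S3 * (2 * (μ * M ^ 2 * S3)) := by
    have hlt : ∑ i, |⟪a i, q⟫| ^ 3 * (|⟪a i, q⟫| * S4)
        < ∑ i, |⟪a i, q⟫| ^ 3 * (2 * (μ * M ^ 2 * S3)) := by
      refine Finset.sum_lt_sum (fun i _ => mul_le_mul_of_nonneg_left (key i).le (by positivity))
        ⟨i0, Finset.mem_univ _, ?_⟩
      refine mul_lt_mul_of_pos_left (key i0) (by positivity)
    have hl : ∑ i, |⟪a i, q⟫| ^ 3 * (|⟪a i, q⟫| * S4) = S4 * S4 := by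
      rw [hS4def, Finset.sum_mul]
      refine Finset.sum_congr rfl fun i _ => ?_
      have habs : ⟪a i, q⟫ ^ 4 = |⟪a i, q⟫| ^ 4 := by
        rw [← abs_pow]; exact (abs_of_nonneg (by positivity)).symm
      rw [habs]; ring
    have hr : ∑ i, |⟪a i, q⟫| ^ 3 * (2 * (μ * M ^ 2 * S3))
        = S3 * (2 * (μ * M ^ 2 * S3)) := by
      rw [hS3def, Finset.sum_mul]
    rw [hl, hr] at hlt; exact hlt
  -- rpow bookkeeping
  set u : ℝ := μ ^ ((1:ℝ)/3) with hudef
  set t : ℝ := S3 ^ ((1:ℝ)/3) with htdef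
  have hu : 0 < u := Real.rpow_pos_of_pos hμ0 _
  have ht : 0 < t := Real.rpow_pos_of_pos hS3pos _
  have hu3 : u ^ (3:ℕ) = μ := by
    rw [hudef, ← Real.rpow_natCast (μ ^ ((1:ℝ)/3)) 3, ← Real.rpow_mul hμ0.le]
    norm_num
  have hu2 : μ ^ ((2:ℝ)/3) = u ^ (2:ℕ) := by
    rw [hudef, ← Real.rpow_natCast (μ ^ ((1:ℝ)/3)) 2, ← Real.rpow_mul hμ0.le]
    norm_num
  have ht3 : t ^ (3:ℕ) = S3 := by
    rw [htdef, ← Real.rpow_natCast (S3 ^ ((1:ℝ)/3)) 3, ← Real.rpow_mul hS3pos.le]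
    norm_num
  have ht2 : S3 ^ ((2:ℝ)/3) = t ^ (2:ℕ) := by
    rw [htdef, ← Real.rpow_natCast (S3 ^ ((1:ℝ)/3)) 2, ← Real.rpow_mul hS3pos.le]
    norm_num
  have hreg' : ξ * u ^ 2 * t ^ 2 ≤ S4 := by
    rw [hu2, ht2] at hreg; linarith [hreg]
  -- cube hMK
  have hMK3 : M ^ 4 * ((m:ℝ)/n) < ξ ^ 3 / 4 := by
    have h1 : (M ^ ((4:ℝ)/3) * ((m:ℝ)/n) ^ ((1:ℝ)/3)) ^ (3:ℕ)
        < (ξ / (4:ℝ) ^ ((1:ℝ)/3)) ^ (3:ℕ) :=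
      pow_lt_pow_left₀ hMK (by positivity) (by norm_num)
    have e1 : (M ^ ((4:ℝ)/3)) ^ (3:ℕ) = M ^ (4:ℕ) := by
      rw [← Real.rpow_natCast (M ^ ((4:ℝ)/3)) 3, ← Real.rpow_mul hM0.le,
        ← Real.rpow_natCast M 4]
      norm_num
    have e2 : (((m:ℝ)/n) ^ ((1:ℝ)/3)) ^ (3:ℕ) = (m:ℝ)/n := by
      rw [← Real.rpow_natCast (((m:ℝ)/n) ^ ((1:ℝ)/3)) 3, ← Real.rpow_mul hK.le]
      norm_num
    have e3 : (((4:ℝ)) ^ ((1:ℝ)/3)) ^ (3:ℕ) = 4 := by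
      rw [← Real.rpow_natCast (((4:ℝ)) ^ ((1:ℝ)/3)) 3,
        ← Real.rpow_mul (by norm_num : (0:ℝ) ≤ 4)]
      norm_num
    rw [mul_pow, div_pow, e1, e2, e3] at h1
    exact h1
  -- rewrite summed inequalities in u, t
  have h2' : S4 < 2 * u ^ 3 * M ^ 2 * ((m:ℝ)/n) := by
    rw [← hu3] at hsum2
    have h' : S4 * S3 < 2 * u ^ 3 * M ^ 2 * ((m:ℝ)/n) * S3 := by
      ring_nf
      ring_nf at hsum2
      linarith
    exact lt_of_mul_lt_mul_right h' hS3pos.le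
  have h3' : S4 ^ 2 < 2 * u ^ 3 * M ^ 2 * t ^ 6 := by
    rw [← hu3, ← ht3] at hsum3
    ring_nf
    ring_nf at hsum3
    linarith
  -- combine
  have hA : ξ * u ^ 2 * t ^ 2 < 2 * u ^ 3 * M ^ 2 * ((m:ℝ)/n) := lt_of_le_of_lt hreg' h2'
  have hB : (ξ * u ^ 2 * t ^ 2) ^ 2 < 2 * u ^ 3 * M ^ 2 * t ^ 6 :=
    lt_of_le_of_lt (pow_le_pow_left₀ (by positivity) hreg' 2) h3'
  have hC : ξ ^ 2 * u < 2 * M ^ 2 * t ^ 2 := by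
    nlinarith [hB, mul_pos (pow_pos hu 3) (pow_pos ht 4)]
  have hD : ξ * t ^ 2 < 2 * u * M ^ 2 * ((m:ℝ)/n) := by
    nlinarith [hA, pow_pos hu 2]
  have hE := mul_lt_mul'' hC hD (by positivity) (by positivity)
  nlinarith [hE, hMK3, mul_pos hu (pow_pos ht 2)]
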